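/- arXiv:0907.0056 — 2 statements merged into one kernel-verified Lean document; each statement's English description precedes it below -/
import Mathlib

section
/- Let A be a convex subset of a real topological vector space E, and let G be a finite-dimensional affine subspace of E such that (interior A) ∩ G ≠ ∅. Then (closure A) ∩ G equals the closure of A ∩ G in the relative topology of G. -/
open Set

theorem closure_inter_affine_eq_relative_closure
    {E : Type*} [AddCommGroup E] [Module ℝ E] [TopologicalSpace E]
    [IsTopologicalAddGroup E] [ContinuousSMul ℝ E]
    (A : Set E) (hA : Convex ℝ A) (G : AffineSubspace ℝ E)
    [FiniteDimensional ℝ G.direction]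
    (h : (interior A ∩ (G : Set E)).Nonempty) :
    closure A ∩ (G : Set E) = Subtype.val '' closure {x : G | (x : E) ∈ A} := by
  obtain ⟨y, hyA, hyG⟩ := h
  apply Subset.antisymm
  · rintro x ⟨hxA, hxG⟩
    refine ⟨⟨x, hxG⟩, ?_, rfl⟩
    -- approximate x by points on the segment from y to x
    have hseg : openSegment ℝ y x ⊆ interior A :=
      hA.openSegment_interior_closure_subset_interior hyA hxA
    have hmem : ∀ t : ℝ, t ∈ Ioo (0:ℝ) 1 → x + t • (y - x) ∈ interior A := by
      intro t ht
      have : x + t • (y - x) = t • y + (1 - t) • x := by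
        rw [smul_sub, sub_smul, one_smul]; abel
      rw [this]
      exact hseg ⟨t, 1 - t, ht.1, by linarith [ht.2], by ring, rfl⟩
    have hG : ∀ t : ℝ, x + t • (y - x) ∈ (G : Set E) := by
      intro t
      have := AffineSubspace.smul_vsub_vadd_mem G t hyG hxG hxG
      simpa [vsub_eq_sub, vadd_eq_add, add_comm] using this
    set f : ℝ → G := fun t => ⟨x + t • (y - x), hG t⟩ with hf
    have htend : Filter.Tendsto f (nhdsWithin 0 (Ioo (0:ℝ) 1)) (nhds ⟨x, hxG⟩) := by
      rw [tendsto_subtype_rng]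
      have : Filter.Tendsto (fun t : ℝ => x + t • (y - x)) (nhds 0) (nhds x) := by
        have hc : Continuous (fun t : ℝ => x + t • (y - x)) :=
          continuous_const.add (continuous_id.smul continuous_const)
        simpa using hc.tendsto (0:ℝ)
      exact this.mono_left nhdsWithin_le_nhds
    have hNB : (nhdsWithin (0:ℝ) (Ioo (0:ℝ) 1)).NeBot := by
      apply mem_closure_iff_nhdsWithin_neBot.mp
      rw [closure_Ioo one_ne_zero.symm]
      exact ⟨le_refl _, zero_le_one⟩
    refine mem_closure_of_tendsto htend ?_
    filter_upwards [self_mem_nhdsWithin] with t ht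
    exact interior_subset (hmem t ht)
  · rintro x ⟨⟨z, hzG⟩, hz, rfl⟩
    constructor
    · have : Continuous (Subtype.val : G → E) := continuous_subtype_val
      have := (this.continuousOn (s := closure {x : G | (x : E) ∈ A})).mono (le_refl _)
      have hmap : Subtype.val '' closure {x : G | (x : E) ∈ A} ⊆
          closure (Subtype.val '' {x : G | (x : E) ∈ A}) :=
        image_closure_subset_closure_image continuous_subtype_val
      refine closure_mono ?_ (hmap ⟨⟨z, hzG⟩, hz, rfl⟩)
      rintro w ⟨⟨w', hw'⟩, hwA, rfl⟩
      exact hwA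
    · exact hzG
end

section
/- Let A be a convex subset of a real topological vector space E and G a finite-dimensional affine subspace with (interior A) ∩ G ≠ ∅. Then (frontier A) ∩ G equals the frontier of A ∩ G in the relative topology of G. -/
open Set

theorem frontier_inter_affine_eq_relative_frontier
    {E : Type*} [AddCommGroup E] [Module ℝ E] [TopologicalSpace E]
    [IsTopologicalAddGroup E] [ContinuousSMul ℝ E]
    (A : Set E) (hA : Convex ℝ A) (G : AffineSubspace ℝ E)
    [FiniteDimensional ℝ G.direction]
    (h : (interior A ∩ (G : Set E)).Nonempty) :
    frontier A ∩ (G : Set E) = Subtype.val '' frontier {x : G | (x : E) ∈ A} := by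
  obtain ⟨y, hyA, hyG⟩ := h
  set S : Set G := {x : G | (x : E) ∈ A} with hS
  have hvalcont : Continuous (Subtype.val : G → E) := continuous_subtype_val
  -- Claim 2: val '' interior S = interior A ∩ G
  have hint : Subtype.val '' interior S = interior A ∩ (G : Set E) := by
    apply Subset.antisymm
    · rintro _ ⟨x, hx, rfl⟩
      refine ⟨?_, x.2⟩
      -- move from x towards the opposite of y a bit
      set f : ℝ → G := fun t => ⟨t • ((x : E) - y) + (x : E),
        G.smul_vsub_vadd_mem t x.2 hyG x.2⟩ with hf
      have hfc : Continuous f := by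
        apply Continuous.subtype_mk
        fun_prop
      have hf0 : f 0 = x := by
        simp [hf]
      have hmem : ∀ᶠ t in nhds 0, f t ∈ interior S := by
        have : Filter.Tendsto f (nhds 0) (nhds x) := hf0 ▸ hfc.tendsto 0
        exact this.eventually (isOpen_interior.mem_nhds hx)
      obtain ⟨ε, hε, hfε⟩ := hmem.exists_gt
      have hzA : f ε ∈ S := interior_subset hfε
      have hzval : ((f ε : G) : E) = ε • ((x : E) - y) + (x : E) := rfl
      have h1 : (1 : ℝ) + ε ≠ 0 := by positivity
      have key : (ε / (1 + ε)) • y + (1 / (1 + ε)) • ((f ε : G) : E) = (x : E) := by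
        rw [hzval]
        match_scalars <;> (field_simp; try ring)
      have := hA.combo_interior_self_mem_interior (a := ε / (1 + ε)) (b := 1 / (1 + ε))
        hyA hzA (by positivity) (by positivity)
        (by rw [← add_div, add_comm, div_self h1])
      rwa [key] at this
    · rintro xA ⟨hxA, hxG⟩
      refine ⟨⟨xA, hxG⟩, ?_, rfl⟩
      have hsub : (Subtype.val : G → E) ⁻¹' interior A ⊆ interior S :=
        preimage_interior_subset_interior_preimage hvalcont
      exact hsub hxA
  -- Claim 1: val '' closure S = closure A ∩ G
  have hcl : Subtype.val '' closure S = closure A ∩ (G : Set E) := by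
    apply Subset.antisymm
    · rintro _ ⟨x, hx, rfl⟩
      refine ⟨?_, x.2⟩
      have := image_closure_subset_closure_image (s := S) hvalcont ⟨x, hx, rfl⟩
      exact closure_mono (image_preimage_subset _ _) this
    · rintro xA ⟨hxA, hxG⟩
      refine ⟨⟨xA, hxG⟩, ?_, rfl⟩
      set g : ℝ → G := fun t => ⟨t • (y - xA) + xA,
        G.smul_vsub_vadd_mem t hyG hxG hxG⟩ with hg
      have hgc : Continuous g := by
        apply Continuous.subtype_mk
        fun_prop
      have hg0 : g 0 = ⟨xA, hxG⟩ := by simp [hg]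
      have htend : Filter.Tendsto g (nhdsWithin 0 (Ioi 0)) (nhds ⟨xA, hxG⟩) :=
        hg0 ▸ (hgc.tendsto 0).mono_left nhdsWithin_le_nhds
      refine mem_closure_of_tendsto htend ?_
      filter_upwards [Ioc_mem_nhdsGT_of_mem (by exact ⟨le_refl 0, one_pos⟩)] with t ht
      have : t • y + (1 - t) • xA ∈ interior A :=
        hA.combo_interior_closure_mem_interior hyA hxA ht.1 (by linarith [ht.2]) (by ring)
      have hval : ((g t : G) : E) = t • y + (1 - t) • xA := by
        simp [hg]
        module
      show ((g t : G) : E) ∈ A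
      rw [hval]
      exact interior_subset this
  -- combine
  have hinj : Function.Injective (Subtype.val : G → E) := Subtype.val_injective
  rw [frontier, frontier, image_diff hinj, hcl, hint]
  ext z
  simp only [mem_diff, mem_inter_iff]
  tauto
end
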